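/- arXiv:1912.04725 — 4 statements merged into one kernel-verified Lean document; each statement's English description precedes it below -/
import Mathlib

section
/- For any i < j, k < l in [n] and any σ ∈ S_n: σ ≥ R_{i,k,l} and σ ≥ L_{i,j,l} in the Bruhat order if and only if σ ≥ T_{i,l}. In other words, the join of R_{i,k,l} and L_{i,j,l} in the Bruhat order is T_{i,l}. -/
namespace SmoothPerm

variable {n : ℕ}

/-- Bruhat order on `S_n`, via the standard counting criterion. -/
def bruhatLE (τ σ : Equiv.Perm (Fin n)) : Prop :=
  ∀ i j : Fin n,
    (Finset.univ.filter (fun x => x ≤ i ∧ σ x ≤ j)).card ≤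
      (Finset.univ.filter (fun x => x ≤ i ∧ τ x ≤ j)).card

/-- Number of inversions (the length ℓ(σ)). -/
def invNum (σ : Equiv.Perm (Fin n)) : ℕ :=
  (Finset.univ.filter (fun p : Fin n × Fin n => p.1 < p.2 ∧ σ p.2 < σ p.1)).card

def isTransposition (τ : Equiv.Perm (Fin n)) : Prop :=
  ∃ i j : Fin n, i < j ∧ τ = Equiv.swap i j

/-- σ is smooth iff ℓ(σ) equals the number of transpositions Bruhat-below σ. -/
def smooth (σ : Equiv.Perm (Fin n)) : Prop :=
  invNum σ = Nat.card {τ : Equiv.Perm (Fin n) // isTransposition τ ∧ bruhatLE τ σ}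

def avoids4231 (σ : Equiv.Perm (Fin n)) : Prop :=
  ¬ ∃ a b c d : Fin n, a < b ∧ b < c ∧ c < d ∧ σ d < σ b ∧ σ b < σ c ∧ σ c < σ a

/-- covexillary = 3412-avoiding. -/
def covexillary (σ : Equiv.Perm (Fin n)) : Prop :=
  ¬ ∃ a b c d : Fin n, a < b ∧ b < c ∧ c < d ∧ σ c < σ d ∧ σ d < σ a ∧ σ a < σ b

def avoids321 (σ : Equiv.Perm (Fin n)) : Prop :=
  ¬ ∃ a b c : Fin n, a < b ∧ b < c ∧ σ c < σ b ∧ σ b < σ a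

/-- The 3-cycle i ↦ j ↦ k ↦ i. -/
def Rc (i j k : Fin n) : Equiv.Perm (Fin n) := Equiv.swap i k * Equiv.swap i j

def Lc (i j k : Fin n) : Equiv.Perm (Fin n) := (Rc i j k)⁻¹

def inC23 (τ : Equiv.Perm (Fin n)) : Prop :=
  isTransposition τ ∨ ∃ i j k : Fin n, i < j ∧ j < k ∧ (τ = Rc i j k ∨ τ = Lc i j k)

/-- The 2-3-table of σ. -/
def Ctab (σ : Equiv.Perm (Fin n)) : Set (Equiv.Perm (Fin n)) :=
  {τ | inC23 τ ∧ bruhatLE τ σ}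

def admissible (A : Set (Equiv.Perm (Fin n))) : Prop :=
  (∀ τ ∈ A, inC23 τ) ∧
  (∀ σ ∈ A, ∀ τ : Equiv.Perm (Fin n), inC23 τ → bruhatLE τ σ → τ ∈ A) ∧
  (∀ i j k l : Fin n, i < j → j < l → i < k → k < l →
    Rc i j l ∈ A → Lc i k l ∈ A → Equiv.swap i l ∈ A) ∧
  (∀ i j k : Fin n, i < j → j < k →
    Equiv.swap i j ∈ A → Equiv.swap j k ∈ A → (Rc i j k ∈ A ∨ Lc i j k ∈ A))

def isWedge (A : Set (Equiv.Perm (Fin n))) (i j : Fin n) : Prop :=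
  i < j ∧ Equiv.swap i j ∈ A ∧
  (∀ i' : Fin n, (i' : ℕ) + 1 = (i : ℕ) → Equiv.swap i' i ∉ A) ∧
  (∀ j' : Fin n, (j : ℕ) + 1 = (j' : ℕ) → Rc i j j' ∉ A)

def derivedSet (A : Set (Equiv.Perm (Fin n))) (i j : Fin n) : Set (Equiv.Perm (Fin n)) :=
  A \ ({Equiv.swap i j} ∪ {τ | ∃ k, j < k ∧ τ = Lc i j k} ∪
       {τ | ∃ k, i < k ∧ k < j ∧ τ = Rc i k j})

def strictTotalOn (S : Set (Equiv.Perm (Fin n)))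
    (r : Equiv.Perm (Fin n) → Equiv.Perm (Fin n) → Prop) : Prop :=
  (∀ x ∈ S, ¬ r x x) ∧
  (∀ x ∈ S, ∀ y ∈ S, ∀ z ∈ S, r x y → r y z → r x z) ∧
  (∀ x ∈ S, ∀ y ∈ S, x ≠ y → r x y ∨ r y x)

def compatibleOrder (A : Set (Equiv.Perm (Fin n)))
    (r : Equiv.Perm (Fin n) → Equiv.Perm (Fin n) → Prop) : Prop :=
  (∀ i j k : Fin n, i < j → j < k → Rc i j k ∈ A → Lc i j k ∉ A →
    r (Equiv.swap i j) (Equiv.swap j k)) ∧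
  (∀ i j k : Fin n, i < j → j < k → Lc i j k ∈ A → Rc i j k ∉ A →
    r (Equiv.swap j k) (Equiv.swap i j)) ∧
  (∀ i j k : Fin n, i < j → j < k → Equiv.swap i k ∈ A →
    ((r (Equiv.swap i j) (Equiv.swap i k) ∧ r (Equiv.swap i k) (Equiv.swap j k)) ∨
     (r (Equiv.swap j k) (Equiv.swap i k) ∧ r (Equiv.swap i k) (Equiv.swap i j))))

def coversIn (S : Set (Equiv.Perm (Fin n)))
    (r : Equiv.Perm (Fin n) → Equiv.Perm (Fin n) → Prop)
    (x y : Equiv.Perm (Fin n)) : Prop :=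
  x ∈ S ∧ y ∈ S ∧ r x y ∧ ∀ z ∈ S, ¬ (r x z ∧ r z y)

/-- m_σ(i) = max σ([i]). -/
def maxS (σ : Equiv.Perm (Fin n)) (i : Fin n) : Fin n :=
  ((Finset.univ.filter (fun x => x ≤ i)).image (fun x => σ x)).max'
    ⟨σ i, Finset.mem_image_of_mem _ (by simp)⟩

/-- The cyclic shift i → i+1 → ⋯ → j → i. -/
def Rseg (i j : Fin n) : Equiv.Perm (Fin n) :=
  ((List.finRange n).filter (fun x => decide (i ≤ x ∧ x ≤ j))).formPerm

def definedByInclusions (σ : Equiv.Perm (Fin n)) : Prop :=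
  ∀ τ : Equiv.Perm (Fin n),
    (∀ x, maxS τ x ≤ maxS σ x) → (∀ x, maxS τ⁻¹ x ≤ maxS σ⁻¹ x) → bruhatLE τ σ

private lemma card_cmp_three (τ τ' : Equiv.Perm (Fin n)) (p q r : Fin n)
    (hpq : p ≠ q) (hpr : p ≠ r) (hqr : q ≠ r)
    (h : ∀ x, x ≠ p → x ≠ q → x ≠ r → τ x = τ' x) (a b : Fin n)
    (hkey : ((if p ≤ a ∧ τ p ≤ b then 1 else 0) + ((if q ≤ a ∧ τ q ≤ b then 1 else 0)
        + (if r ≤ a ∧ τ r ≤ b then 1 else 0)) : ℕ) ≤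
      (if p ≤ a ∧ τ' p ≤ b then 1 else 0) + ((if q ≤ a ∧ τ' q ≤ b then 1 else 0)
        + (if r ≤ a ∧ τ' r ≤ b then 1 else 0))) :
    (Finset.univ.filter (fun x => x ≤ a ∧ τ x ≤ b)).card ≤
      (Finset.univ.filter (fun x => x ≤ a ∧ τ' x ≤ b)).card := by
  classical
  have hs : ({p, q, r} : Finset (Fin n)) ⊆ Finset.univ := Finset.subset_univ _
  rw [Finset.card_filter, Finset.card_filter, ← Finset.sum_sdiff hs, ← Finset.sum_sdiff hs]
  have e1 : ∑ x ∈ Finset.univ \ {p, q, r}, (if x ≤ a ∧ τ x ≤ b then 1 else 0)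
      = ∑ x ∈ Finset.univ \ {p, q, r}, (if x ≤ a ∧ τ' x ≤ b then 1 else 0) := by
    refine Finset.sum_congr rfl fun x hx => ?_
    simp only [Finset.mem_sdiff, Finset.mem_insert, Finset.mem_singleton, not_or] at hx
    rw [h x hx.2.1 hx.2.2.1 hx.2.2.2]
  have e2 : ∀ ρ : Equiv.Perm (Fin n),
      ∑ x ∈ ({p, q, r} : Finset (Fin n)), (if x ≤ a ∧ ρ x ≤ b then (1:ℕ) else 0)
      = (if p ≤ a ∧ ρ p ≤ b then 1 else 0) + ((if q ≤ a ∧ ρ q ≤ b then 1 else 0)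
        + (if r ≤ a ∧ ρ r ≤ b then 1 else 0)) := by
    intro ρ
    rw [Finset.sum_insert (by simp [hpq, hpr]), Finset.sum_insert (by simp [hqr]),
      Finset.sum_singleton]
  rw [e1, e2, e2]
  omega

/-- R_{i,k,l} ∨ L_{i,j,l} = T_{i,l}. -/
theorem join_R_L_eq_T (n : ℕ) (i j k l : Fin n)
    (hij : i < j) (hjl : j < l) (hik : i < k) (hkl : k < l)
    (σ : Equiv.Perm (Fin n)) :
    (bruhatLE (Rc i k l) σ ∧ bruhatLE (Lc i j l) σ) ↔ bruhatLE (Equiv.swap i l) σ := by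
  have hil : i < l := hik.trans hkl
  -- values of Rc i k l
  have hRi : Rc i k l i = k := by
    simp [Rc, Equiv.Perm.mul_apply, Equiv.swap_apply_left,
      Equiv.swap_apply_of_ne_of_ne hik.ne' hkl.ne]
  have hRk : Rc i k l k = l := by
    simp [Rc, Equiv.Perm.mul_apply, Equiv.swap_apply_right, Equiv.swap_apply_left]
  have hRl : Rc i k l l = i := by
    simp [Rc, Equiv.Perm.mul_apply, Equiv.swap_apply_right,
      Equiv.swap_apply_of_ne_of_ne hil.ne' hkl.ne']
  have hRx : ∀ x, x ≠ i → x ≠ k → x ≠ l → Rc i k l x = x := by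
    intro x h1 h2 h3
    simp [Rc, Equiv.Perm.mul_apply, Equiv.swap_apply_of_ne_of_ne h1 h2,
      Equiv.swap_apply_of_ne_of_ne h1 h3]
  -- values of Lc i j l
  have hLdef : ∀ x, Lc i j l x = Equiv.swap i j (Equiv.swap i l x) := by
    intro x
    simp [Lc, Rc, mul_inv_rev, Equiv.swap_inv, Equiv.Perm.mul_apply]
  have hLi : Lc i j l i = l := by
    rw [hLdef, Equiv.swap_apply_left, Equiv.swap_apply_of_ne_of_ne hil.ne' hjl.ne']
  have hLj : Lc i j l j = i := by
    rw [hLdef, Equiv.swap_apply_of_ne_of_ne hij.ne' hjl.ne, Equiv.swap_apply_right]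
  have hLl : Lc i j l l = j := by
    rw [hLdef, Equiv.swap_apply_right, Equiv.swap_apply_left]
  have hLx : ∀ x, x ≠ i → x ≠ j → x ≠ l → Lc i j l x = x := by
    intro x h1 h2 h3
    rw [hLdef, Equiv.swap_apply_of_ne_of_ne h1 h3, Equiv.swap_apply_of_ne_of_ne h1 h2]
  have hTx : ∀ x, x ≠ i → x ≠ l → Equiv.swap i l x = x := fun x h1 h2 =>
    Equiv.swap_apply_of_ne_of_ne h1 h2
  constructor
  · rintro ⟨hR, hL⟩ a b
    by_cases hc : a < k ∧ k ≤ b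
    · refine (hL a b).trans ?_
      refine card_cmp_three _ _ i j l hij.ne hil.ne hjl.ne
        (fun x h1 h2 h3 => by rw [hLx x h1 h2 h3, hTx x h1 h3]) a b ?_
      rw [hLi, hLj, hLl, Equiv.swap_apply_left, hTx j hij.ne' hjl.ne, Equiv.swap_apply_right]
      simp only [Fin.le_def, Fin.lt_def] at *
      split_ifs <;> omega
    · refine (hR a b).trans ?_
      refine card_cmp_three _ _ i k l hik.ne hil.ne hkl.ne
        (fun x h1 h2 h3 => by rw [hRx x h1 h2 h3, hTx x h1 h3]) a b ?_
      rw [hRi, hRk, hRl, Equiv.swap_apply_left, hTx k hik.ne' hkl.ne, Equiv.swap_apply_right]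
      simp only [Fin.le_def, Fin.lt_def, not_and, not_lt] at *
      split_ifs <;> omega
  · intro hT
    constructor <;> intro a b <;> refine (hT a b).trans ?_
    · refine card_cmp_three _ _ i k l hik.ne hil.ne hkl.ne
        (fun x h1 h2 h3 => by rw [hTx x h1 h3, hRx x h1 h2 h3]) a b ?_
      rw [hRi, hRk, hRl, Equiv.swap_apply_left, hTx k hik.ne' hkl.ne, Equiv.swap_apply_right]
      simp only [Fin.le_def, Fin.lt_def] at *
      split_ifs <;> omega
    · refine card_cmp_three _ _ i j l hij.ne hil.ne hjl.ne
        (fun x h1 h2 h3 => by rw [hTx x h1 h3, hLx x h1 h2 h3]) a b ?_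
      rw [hLi, hLj, hLl, Equiv.swap_apply_left, hTx j hij.ne' hjl.ne, Equiv.swap_apply_right]
      simp only [Fin.le_def, Fin.lt_def] at *
      split_ifs <;> omega

end SmoothPerm
end

section
/- If τ ∈ S_n is covexillary (avoids the pattern 3412), then its 2-3-table C(τ) is admissible: it is downward closed in Bruhat order, contains T_{i,l} whenever it contains R_{i,j,l} and L_{i,k,l} with i < j, k < l, and whenever T_{i,j}, T_{j,k} ∈ C(τ) with i < j < k, at least one of R_{i,j,k}, L_{i,j,k} belongs to C(τ). -/
namespace SmoothPerm

variable {n : ℕ}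

-- ######## auxiliary development ########

def dmat (σ : Equiv.Perm (Fin n)) (x y : Fin n) : ℕ :=
  (Finset.univ.filter (fun z => z ≤ x ∧ σ z ≤ y)).card

lemma bruhatLE_iff_dmat {τ σ : Equiv.Perm (Fin n)} :
    bruhatLE τ σ ↔ ∀ x y, dmat σ x y ≤ dmat τ x y := Iff.rfl

lemma card_filter_le (x : Fin n) :
    (Finset.univ.filter (fun z => z ≤ x)).card = x.val + 1 := by
  have h : Finset.univ.filter (fun z => z ≤ x) = Finset.Iic x := by ext z; simp
  rw [h, Fin.card_Iic]

lemma dmat_id (x y : Fin n) :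
    (Finset.univ.filter (fun z : Fin n => z ≤ x ∧ z ≤ y)).card = min x.val y.val + 1 := by
  rcases le_total x y with h | h
  · have e : Finset.univ.filter (fun z : Fin n => z ≤ x ∧ z ≤ y)
        = Finset.univ.filter (fun z => z ≤ x) := by
      ext z; simp only [Finset.mem_filter, and_congr_right_iff]
      exact fun _ => ⟨fun hz => hz.1, fun hz => ⟨hz, hz.trans h⟩⟩
    rw [e, card_filter_le]
    have : min x.val y.val = x.val := Nat.min_eq_left h
    omega
  · have e : Finset.univ.filter (fun z : Fin n => z ≤ x ∧ z ≤ y)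
        = Finset.univ.filter (fun z => z ≤ y) := by
      ext z; simp only [Finset.mem_filter, and_congr_right_iff]
      exact fun _ => ⟨fun hz => hz.2, fun hz => ⟨hz.trans h, hz⟩⟩
    rw [e, card_filter_le]
    have : min x.val y.val = y.val := Nat.min_eq_right h
    omega

lemma dmat_le_x (σ : Equiv.Perm (Fin n)) (x y : Fin n) : dmat σ x y ≤ x.val + 1 := by
  unfold dmat
  rw [← card_filter_le x]
  apply Finset.card_le_card
  intro z hz
  simp only [Finset.mem_filter] at *
  exact ⟨hz.1, hz.2.1⟩

lemma dmat_le_y (σ : Equiv.Perm (Fin n)) (x y : Fin n) : dmat σ x y ≤ y.val + 1 := by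
  unfold dmat
  rw [← card_filter_le y]
  apply Finset.card_le_card_of_injOn σ
  · intro z hz; simp only [Finset.mem_coe, Finset.mem_filter] at *; exact ⟨Finset.mem_univ _, hz.2.2⟩
  · exact σ.injective.injOn

lemma exists_row {σ : Equiv.Perm (Fin n)} {x y : Fin n} (h : dmat σ x y ≤ x.val) :
    ∃ a, a ≤ x ∧ y < σ a := by
  by_contra hc
  push_neg at hc
  have e : Finset.univ.filter (fun z => z ≤ x ∧ σ z ≤ y)
      = Finset.univ.filter (fun z => z ≤ x) := by
    ext z; simp only [Finset.mem_filter, and_congr_right_iff]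
    exact fun _ => ⟨fun hz => hz.1, fun hz => ⟨hz, hc z hz⟩⟩
  unfold dmat at h
  rw [e, card_filter_le] at h
  omega

lemma exists_col {σ : Equiv.Perm (Fin n)} {x y : Fin n} (h : dmat σ x y ≤ y.val) :
    ∃ b, x < b ∧ σ b ≤ y := by
  by_contra hc
  push_neg at hc
  unfold dmat at h
  have key : (Finset.univ.filter (fun w : Fin n => w ≤ y)).card
      ≤ (Finset.univ.filter (fun z => z ≤ x ∧ σ z ≤ y)).card := by
    apply Finset.card_le_card_of_injOn σ.symm
    · intro w hw
      simp only [Finset.mem_coe, Finset.mem_filter] at *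
      have hw' : σ (σ.symm w) ≤ y := by rw [Equiv.apply_symm_apply]; exact hw.2
      refine ⟨Finset.mem_univ _, ?_, hw'⟩
      by_contra hgt
      push_neg at hgt
      exact absurd hw' (not_le.mpr (hc _ hgt))
    · exact σ.symm.injective.injOn
  rw [card_filter_le] at key
  omega

lemma row_escape_le {σ : Equiv.Perm (Fin n)} {x y a : Fin n} (ha : a ≤ x) (hv : y < σ a) :
    dmat σ x y ≤ x.val := by
  unfold dmat
  have sub : Finset.univ.filter (fun z => z ≤ x ∧ σ z ≤ y)
      ⊆ (Finset.univ.filter (fun z => z ≤ x)).erase a := by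
    intro z hz
    simp only [Finset.mem_filter, Finset.mem_erase] at *
    refine ⟨fun he => ?_, Finset.mem_univ _, hz.2.1⟩
    exact absurd hz.2.2 (by rw [he]; exact not_le.mpr hv)
  have := Finset.card_le_card sub
  rw [Finset.card_erase_of_mem (by simp [ha]), card_filter_le] at this
  omega

lemma col_escape_le {σ : Equiv.Perm (Fin n)} {x y b : Fin n} (hb : x < b) (hv : σ b ≤ y) :
    dmat σ x y ≤ y.val := by
  unfold dmat
  have sub : (Finset.univ.filter (fun z => z ≤ x ∧ σ z ≤ y)).image σ
      ⊆ (Finset.univ.filter (fun w : Fin n => w ≤ y)).erase (σ b) := by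
    intro w hw
    simp only [Finset.mem_image, Finset.mem_filter, Finset.mem_erase] at *
    obtain ⟨z, ⟨_, hz1, hz2⟩, rfl⟩ := hw
    refine ⟨fun he => ?_, Finset.mem_univ _, hz2⟩
    have : z = b := σ.injective he
    exact absurd hz1 (by rw [this]; exact not_le.mpr hb)
  have hcard := Finset.card_le_card sub
  rw [Finset.card_image_of_injective _ σ.injective,
    Finset.card_erase_of_mem (by simp [hv]), card_filter_le] at hcard
  exact hcard.trans (by omega)

lemma dmat_le_min_succ (σ : Equiv.Perm (Fin n)) (x y : Fin n) :
    dmat σ x y ≤ min x.val y.val + 1 := by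
  rcases Nat.le_total x.val y.val with h | h
  · rw [Nat.min_eq_left h]; exact dmat_le_x σ x y
  · rw [Nat.min_eq_right h]; exact dmat_le_y σ x y

lemma filter_card_add (p q : Fin n → Prop) [DecidablePred p] [DecidablePred q]
    (T : Finset (Fin n)) (h : ∀ z ∉ T, (p z ↔ q z)) :
    (Finset.univ.filter p).card + (T.filter q).card
      = (Finset.univ.filter q).card + (T.filter p).card := by
  have hsplit : ∀ (r : Fin n → Prop) (_ : DecidablePred r),
      (Finset.univ.filter r).card = ((Finset.univ \ T).filter r).card + (T.filter r).card := by
    intro r hr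
    rw [← Finset.card_union_of_disjoint
      (Finset.disjoint_filter_filter Finset.sdiff_disjoint), ← Finset.filter_union,
      Finset.sdiff_union_of_subset (Finset.subset_univ T)]
  rw [hsplit p inferInstance, hsplit q inferInstance]
  have e : (Finset.univ \ T).filter p = (Finset.univ \ T).filter q := by
    apply Finset.filter_congr
    intro z hz
    simp only [Finset.mem_sdiff, Finset.mem_univ, true_and] at hz
    exact h z hz
  rw [e]; ring

lemma card_filter_pair (a b : Fin n) (hab : a ≠ b) (q : Fin n → Prop) [DecidablePred q] :
    (({a, b} : Finset (Fin n)).filter q).card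
      = (if q a then 1 else 0) + (if q b then 1 else 0) := by
  rw [Finset.card_filter, Finset.sum_insert (by simp [hab]), Finset.sum_singleton]

lemma card_filter_triple (a b c : Fin n) (hab : a ≠ b) (hac : a ≠ c) (hbc : b ≠ c)
    (q : Fin n → Prop) [DecidablePred q] :
    (({a, b, c} : Finset (Fin n)).filter q).card
      = (if q a then 1 else 0) + (if q b then 1 else 0) + (if q c then 1 else 0) := by
  rw [Finset.card_filter, Finset.sum_insert (by simp [hab, hac]),
    Finset.sum_insert (by simp [hbc]), Finset.sum_singleton]
  ring

lemma Rc_apply_left {i j k : Fin n} (hij : i < j) (hjk : j < k) : Rc i j k i = j := by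
  simp only [Rc, Equiv.Perm.mul_apply, Equiv.swap_apply_left]
  exact Equiv.swap_apply_of_ne_of_ne hij.ne' hjk.ne

lemma Rc_apply_mid {i j k : Fin n} (hij : i < j) (hjk : j < k) : Rc i j k j = k := by
  simp only [Rc, Equiv.Perm.mul_apply, Equiv.swap_apply_right, Equiv.swap_apply_left]

lemma Rc_apply_right {i j k : Fin n} (hij : i < j) (hjk : j < k) : Rc i j k k = i := by
  simp only [Rc, Equiv.Perm.mul_apply, Equiv.swap_apply_of_ne_of_ne (hij.trans hjk).ne' hjk.ne',
    Equiv.swap_apply_right]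

lemma Rc_apply_other {i j k z : Fin n} (hzi : z ≠ i) (hzj : z ≠ j) (hzk : z ≠ k) :
    Rc i j k z = z := by
  simp only [Rc, Equiv.Perm.mul_apply]
  rw [Equiv.swap_apply_of_ne_of_ne hzi hzj, Equiv.swap_apply_of_ne_of_ne hzi hzk]

lemma Lc_apply_left {i j k : Fin n} (hij : i < j) (hjk : j < k) : Lc i j k i = k := by
  have h := Rc_apply_right hij hjk
  apply (Rc i j k).injective
  rw [Lc] at *
  simp [h]

lemma Lc_apply_mid {i j k : Fin n} (hij : i < j) (hjk : j < k) : Lc i j k j = i := by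
  have h := Rc_apply_left hij hjk
  apply (Rc i j k).injective
  rw [Lc] at *
  simp [h]

lemma Lc_apply_right {i j k : Fin n} (hij : i < j) (hjk : j < k) : Lc i j k k = j := by
  have h := Rc_apply_mid hij hjk
  apply (Rc i j k).injective
  rw [Lc] at *
  simp [h]

lemma Lc_apply_other {i j k z : Fin n} (hzi : z ≠ i) (hzj : z ≠ j) (hzk : z ≠ k) :
    Lc i j k z = z := by
  have h := Rc_apply_other hzi hzj hzk
  apply (Rc i j k).injective
  rw [Lc] at *
  simp [h]

lemma dmat_swap {i j : Fin n} (hij : i < j) (x y : Fin n) :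
    dmat (Equiv.swap i j) x y
      + (if i.val ≤ x.val ∧ x.val < j.val ∧ i.val ≤ y.val ∧ y.val < j.val then 1 else 0)
      = min x.val y.val + 1 := by
  unfold dmat
  have h := filter_card_add (fun z => z ≤ x ∧ Equiv.swap i j z ≤ y)
    (fun z => z ≤ x ∧ z ≤ y) {i, j} (by
      intro z hz
      simp only [Finset.mem_insert, Finset.mem_singleton] at hz
      push_neg at hz
      simp only [Equiv.swap_apply_of_ne_of_ne hz.1 hz.2])
  rw [card_filter_pair i j hij.ne, card_filter_pair i j hij.ne, dmat_id] at h
  simp only [Equiv.swap_apply_left, Equiv.swap_apply_right] at h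
  have hij' : i.val < j.val := hij
  simp only [Fin.le_def, Fin.lt_def] at h ⊢
  split_ifs at h ⊢ <;> omega

lemma dmat_Rc {i j k : Fin n} (hij : i < j) (hjk : j < k) (x y : Fin n) :
    dmat (Rc i j k) x y
      + (if (i.val ≤ x.val ∧ x.val < k.val ∧ i.val ≤ y.val ∧ y.val < j.val)
          ∨ (j.val ≤ x.val ∧ x.val < k.val ∧ j.val ≤ y.val ∧ y.val < k.val) then 1 else 0)
      = min x.val y.val + 1 := by
  unfold dmat
  have h := filter_card_add (fun z => z ≤ x ∧ Rc i j k z ≤ y)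
    (fun z => z ≤ x ∧ z ≤ y) {i, j, k} (by
      intro z hz
      simp only [Finset.mem_insert, Finset.mem_singleton] at hz
      push_neg at hz
      simp only [Rc_apply_other hz.1 hz.2.1 hz.2.2])
  rw [card_filter_triple i j k hij.ne (hij.trans hjk).ne hjk.ne,
    card_filter_triple i j k hij.ne (hij.trans hjk).ne hjk.ne, dmat_id] at h
  rw [Rc_apply_left hij hjk, Rc_apply_mid hij hjk, Rc_apply_right hij hjk] at h
  have hij' : i.val < j.val := hij
  have hjk' : j.val < k.val := hjk
  simp only [Fin.le_def, Fin.lt_def] at h ⊢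
  split_ifs at h ⊢ <;> omega

lemma dmat_Lc {i j k : Fin n} (hij : i < j) (hjk : j < k) (x y : Fin n) :
    dmat (Lc i j k) x y
      + (if (i.val ≤ x.val ∧ x.val < j.val ∧ i.val ≤ y.val ∧ y.val < k.val)
          ∨ (j.val ≤ x.val ∧ x.val < k.val ∧ j.val ≤ y.val ∧ y.val < k.val) then 1 else 0)
      = min x.val y.val + 1 := by
  unfold dmat
  have h := filter_card_add (fun z => z ≤ x ∧ Lc i j k z ≤ y)
    (fun z => z ≤ x ∧ z ≤ y) {i, j, k} (by
      intro z hz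
      simp only [Finset.mem_insert, Finset.mem_singleton] at hz
      push_neg at hz
      simp only [Lc_apply_other hz.1 hz.2.1 hz.2.2])
  rw [card_filter_triple i j k hij.ne (hij.trans hjk).ne hjk.ne,
    card_filter_triple i j k hij.ne (hij.trans hjk).ne hjk.ne, dmat_id] at h
  rw [Lc_apply_left hij hjk, Lc_apply_mid hij hjk, Lc_apply_right hij hjk] at h
  have hij' : i.val < j.val := hij
  have hjk' : j.val < k.val := hjk
  simp only [Fin.le_def, Fin.lt_def] at h ⊢
  split_ifs at h ⊢ <;> omega

lemma bruhatLE_swap_iff {σ : Equiv.Perm (Fin n)} {i j : Fin n} (hij : i < j) :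
    bruhatLE (Equiv.swap i j) σ ↔ (∃ a, a ≤ i ∧ j ≤ σ a) ∧ (∃ b, j ≤ b ∧ σ b ≤ i) := by
  have hij' : i.val < j.val := hij
  have hjn := j.isLt
  constructor
  · intro h
    let jm : Fin n := ⟨j.val - 1, by omega⟩
    have hjmv : jm.val = j.val - 1 := rfl
    constructor
    · have h1 : dmat σ i jm ≤ dmat (Equiv.swap i j) i jm := h i jm
      have e := dmat_swap hij i jm
      rw [if_pos (show i.val ≤ i.val ∧ i.val < j.val ∧ i.val ≤ jm.val ∧ jm.val < j.val by
        omega)] at e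
      obtain ⟨a, ha, hya⟩ := exists_row (show dmat σ i jm ≤ i.val by omega)
      refine ⟨a, ha, ?_⟩
      have := Fin.lt_def.mp hya
      rw [Fin.le_def]; omega
    · have h1 : dmat σ jm i ≤ dmat (Equiv.swap i j) jm i := h jm i
      have e := dmat_swap hij jm i
      rw [if_pos (show i.val ≤ jm.val ∧ jm.val < j.val ∧ i.val ≤ i.val ∧ i.val < j.val by
        omega)] at e
      obtain ⟨b, hb, hyb⟩ := exists_col (show dmat σ jm i ≤ i.val by omega)
      refine ⟨b, ?_, hyb⟩
      have := Fin.lt_def.mp hb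
      rw [Fin.le_def]; omega
  · rintro ⟨⟨a, ha, hva⟩, ⟨b, hb, hvb⟩⟩ x y
    show dmat σ x y ≤ dmat (Equiv.swap i j) x y
    have e := dmat_swap hij x y
    by_cases hreg : i.val ≤ x.val ∧ x.val < j.val ∧ i.val ≤ y.val ∧ y.val < j.val
    · rw [if_pos hreg] at e
      have h1 : dmat σ x y ≤ x.val := row_escape_le
        (Fin.le_def.mpr (le_trans (Fin.le_def.mp ha) hreg.1))
        (Fin.lt_def.mpr (lt_of_lt_of_le hreg.2.2.2 (Fin.le_def.mp hva)))
      have h2 : dmat σ x y ≤ y.val := col_escape_le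
        (Fin.lt_def.mpr (lt_of_lt_of_le hreg.2.1 (Fin.le_def.mp hb)))
        (Fin.le_def.mpr (le_trans (Fin.le_def.mp hvb) hreg.2.2.1))
      omega
    · rw [if_neg hreg] at e
      have := dmat_le_min_succ σ x y
      omega

lemma bruhatLE_Rc_iff {σ : Equiv.Perm (Fin n)} {i j k : Fin n} (hij : i < j) (hjk : j < k) :
    bruhatLE (Rc i j k) σ ↔
      (∃ a, a ≤ i ∧ j ≤ σ a) ∧ (∃ a, a ≤ j ∧ k ≤ σ a) ∧ (∃ b, k ≤ b ∧ σ b ≤ i) := by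
  have hij' : i.val < j.val := hij
  have hjk' : j.val < k.val := hjk
  have hkn := k.isLt
  constructor
  · intro h
    let jm : Fin n := ⟨j.val - 1, by omega⟩
    let km : Fin n := ⟨k.val - 1, by omega⟩
    have hjmv : jm.val = j.val - 1 := rfl
    have hkmv : km.val = k.val - 1 := rfl
    refine ⟨?_, ?_, ?_⟩
    · have h1 : dmat σ i jm ≤ dmat (Rc i j k) i jm := h i jm
      have e := dmat_Rc hij hjk i jm
      rw [if_pos (Or.inl (show i.val ≤ i.val ∧ i.val < k.val ∧ i.val ≤ jm.val ∧ jm.val < j.val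
        by omega))] at e
      obtain ⟨a, ha, hya⟩ := exists_row (show dmat σ i jm ≤ i.val by omega)
      refine ⟨a, ha, ?_⟩
      have := Fin.lt_def.mp hya
      rw [Fin.le_def]; omega
    · have h1 : dmat σ j km ≤ dmat (Rc i j k) j km := h j km
      have e := dmat_Rc hij hjk j km
      rw [if_pos (Or.inr (show j.val ≤ j.val ∧ j.val < k.val ∧ j.val ≤ km.val ∧ km.val < k.val
        by omega))] at e
      obtain ⟨a, ha, hya⟩ := exists_row (show dmat σ j km ≤ j.val by omega)
      refine ⟨a, ha, ?_⟩
      have := Fin.lt_def.mp hya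
      rw [Fin.le_def]; omega
    · have h1 : dmat σ km i ≤ dmat (Rc i j k) km i := h km i
      have e := dmat_Rc hij hjk km i
      rw [if_pos (Or.inl (show i.val ≤ km.val ∧ km.val < k.val ∧ i.val ≤ i.val ∧ i.val < j.val
        by omega))] at e
      obtain ⟨b, hb, hyb⟩ := exists_col (show dmat σ km i ≤ i.val by omega)
      refine ⟨b, ?_, hyb⟩
      have := Fin.lt_def.mp hb
      rw [Fin.le_def]; omega
  · rintro ⟨⟨a1, ha1, hva1⟩, ⟨a2, ha2, hva2⟩, ⟨b, hb, hvb⟩⟩ x y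
    show dmat σ x y ≤ dmat (Rc i j k) x y
    have e := dmat_Rc hij hjk x y
    by_cases hreg : (i.val ≤ x.val ∧ x.val < k.val ∧ i.val ≤ y.val ∧ y.val < j.val)
        ∨ (j.val ≤ x.val ∧ x.val < k.val ∧ j.val ≤ y.val ∧ y.val < k.val)
    · rw [if_pos hreg] at e
      rcases hreg with ⟨hx1, hx2, hy1, hy2⟩ | ⟨hx1, hx2, hy1, hy2⟩
      · have h1 : dmat σ x y ≤ x.val := row_escape_le
          (Fin.le_def.mpr (le_trans (Fin.le_def.mp ha1) hx1))
          (Fin.lt_def.mpr (lt_of_lt_of_le hy2 (Fin.le_def.mp hva1)))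
        have h2 : dmat σ x y ≤ y.val := col_escape_le
          (Fin.lt_def.mpr (lt_of_lt_of_le hx2 (Fin.le_def.mp hb)))
          (Fin.le_def.mpr (le_trans (Fin.le_def.mp hvb) hy1))
        omega
      · have h1 : dmat σ x y ≤ x.val := row_escape_le
          (Fin.le_def.mpr (le_trans (Fin.le_def.mp ha2) hx1))
          (Fin.lt_def.mpr (lt_of_lt_of_le hy2 (Fin.le_def.mp hva2)))
        have h2 : dmat σ x y ≤ y.val := col_escape_le
          (Fin.lt_def.mpr (lt_of_lt_of_le hx2 (Fin.le_def.mp hb)))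
          (Fin.le_def.mpr (by have := Fin.le_def.mp hvb; omega))
        omega
    · rw [if_neg hreg] at e
      have := dmat_le_min_succ σ x y
      omega

lemma bruhatLE_Lc_iff {σ : Equiv.Perm (Fin n)} {i j k : Fin n} (hij : i < j) (hjk : j < k) :
    bruhatLE (Lc i j k) σ ↔
      (∃ a, a ≤ i ∧ k ≤ σ a) ∧ (∃ b, j ≤ b ∧ σ b ≤ i) ∧ (∃ b, k ≤ b ∧ σ b ≤ j) := by
  have hij' : i.val < j.val := hij
  have hjk' : j.val < k.val := hjk
  have hkn := k.isLt
  constructor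
  · intro h
    let jm : Fin n := ⟨j.val - 1, by omega⟩
    let km : Fin n := ⟨k.val - 1, by omega⟩
    have hjmv : jm.val = j.val - 1 := rfl
    have hkmv : km.val = k.val - 1 := rfl
    refine ⟨?_, ?_, ?_⟩
    · have h1 : dmat σ i km ≤ dmat (Lc i j k) i km := h i km
      have e := dmat_Lc hij hjk i km
      rw [if_pos (Or.inl (show i.val ≤ i.val ∧ i.val < j.val ∧ i.val ≤ km.val ∧ km.val < k.val
        by omega))] at e
      obtain ⟨a, ha, hya⟩ := exists_row (show dmat σ i km ≤ i.val by omega)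
      refine ⟨a, ha, ?_⟩
      have := Fin.lt_def.mp hya
      rw [Fin.le_def]; omega
    · have h1 : dmat σ jm i ≤ dmat (Lc i j k) jm i := h jm i
      have e := dmat_Lc hij hjk jm i
      rw [if_pos (Or.inl (show i.val ≤ jm.val ∧ jm.val < j.val ∧ i.val ≤ i.val ∧ i.val < k.val
        by omega))] at e
      obtain ⟨b, hb, hyb⟩ := exists_col (show dmat σ jm i ≤ i.val by omega)
      refine ⟨b, ?_, hyb⟩
      have := Fin.lt_def.mp hb
      rw [Fin.le_def]; omega
    · have h1 : dmat σ km j ≤ dmat (Lc i j k) km j := h km j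
      have e := dmat_Lc hij hjk km j
      rw [if_pos (Or.inr (show j.val ≤ km.val ∧ km.val < k.val ∧ j.val ≤ j.val ∧ j.val < k.val
        by omega))] at e
      obtain ⟨b, hb, hyb⟩ := exists_col (show dmat σ km j ≤ j.val by omega)
      refine ⟨b, ?_, hyb⟩
      have := Fin.lt_def.mp hb
      rw [Fin.le_def]; omega
  · rintro ⟨⟨a, ha, hva⟩, ⟨b1, hb1, hvb1⟩, ⟨b2, hb2, hvb2⟩⟩ x y
    show dmat σ x y ≤ dmat (Lc i j k) x y
    have e := dmat_Lc hij hjk x y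
    by_cases hreg : (i.val ≤ x.val ∧ x.val < j.val ∧ i.val ≤ y.val ∧ y.val < k.val)
        ∨ (j.val ≤ x.val ∧ x.val < k.val ∧ j.val ≤ y.val ∧ y.val < k.val)
    · rw [if_pos hreg] at e
      rcases hreg with ⟨hx1, hx2, hy1, hy2⟩ | ⟨hx1, hx2, hy1, hy2⟩
      · have h1 : dmat σ x y ≤ x.val := row_escape_le
          (Fin.le_def.mpr (le_trans (Fin.le_def.mp ha) hx1))
          (Fin.lt_def.mpr (lt_of_lt_of_le hy2 (Fin.le_def.mp hva)))
        have h2 : dmat σ x y ≤ y.val := col_escape_le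
          (Fin.lt_def.mpr (lt_of_lt_of_le hx2 (Fin.le_def.mp hb1)))
          (Fin.le_def.mpr (le_trans (Fin.le_def.mp hvb1) hy1))
        omega
      · have h1 : dmat σ x y ≤ x.val := row_escape_le
          (Fin.le_def.mpr (by have := Fin.le_def.mp ha; omega))
          (Fin.lt_def.mpr (lt_of_lt_of_le hy2 (Fin.le_def.mp hva)))
        have h2 : dmat σ x y ≤ y.val := col_escape_le
          (Fin.lt_def.mpr (lt_of_lt_of_le hx2 (Fin.le_def.mp hb2)))
          (Fin.le_def.mpr (le_trans (Fin.le_def.mp hvb2) hy1))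
        omega
    · rw [if_neg hreg] at e
      have := dmat_le_min_succ σ x y
      omega

/-- if τ is covexillary then C(τ) is admissible. -/
theorem covexillary_Ctab_admissible (n : ℕ) (τ : Equiv.Perm (Fin n))
    (h : covexillary τ) : admissible (Ctab τ) := by
  refine ⟨fun τ' hτ' => hτ'.1,
    fun σ hσ τ' h1 h2 => ⟨h1, fun a b => le_trans (hσ.2 a b) (h2 a b)⟩, ?_, ?_⟩
  · intro i j k l hij hjl hik hkl hR hL
    obtain ⟨_, _, hRb⟩ := (bruhatLE_Rc_iff hij hjl).mp hR.2
    obtain ⟨hLa, _, _⟩ := (bruhatLE_Lc_iff hik hkl).mp hL.2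
    exact ⟨Or.inl ⟨i, l, hij.trans hjl, rfl⟩,
      (bruhatLE_swap_iff (hij.trans hjl)).mpr ⟨hLa, hRb⟩⟩
  · intro i j k hij hjk hTij hTjk
    obtain ⟨⟨a1, ha1, hva1⟩, ⟨b1, hb1, hvb1⟩⟩ := (bruhatLE_swap_iff hij).mp hTij.2
    obtain ⟨⟨a2, ha2, hva2⟩, ⟨b2, hb2, hvb2⟩⟩ := (bruhatLE_swap_iff hjk).mp hTjk.2
    by_cases hRg : ∃ b, k ≤ b ∧ τ b ≤ i
    · exact Or.inl ⟨Or.inr ⟨i, j, k, hij, hjk, Or.inl rfl⟩,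
        (bruhatLE_Rc_iff hij hjk).mpr ⟨⟨a1, ha1, hva1⟩, ⟨a2, ha2, hva2⟩, hRg⟩⟩
    · by_cases hLg : ∃ a, a ≤ i ∧ k ≤ τ a
      · exact Or.inr ⟨Or.inr ⟨i, j, k, hij, hjk, Or.inr rfl⟩,
          (bruhatLE_Lc_iff hij hjk).mpr ⟨hLg, ⟨b1, hb1, hvb1⟩, ⟨b2, hb2, hvb2⟩⟩⟩
      · exfalso
        push_neg at hRg hLg
        apply h
        have hik : i < k := hij.trans hjk
        have hia2 : i < a2 := by
          by_contra hc
          push_neg at hc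
          exact absurd hva2 (not_le.mpr (hLg a2 hc))
        have ha2b1 : a2 < b1 := lt_of_le_of_ne (ha2.trans hb1) (by
          intro e
          rw [e] at hva2
          exact absurd (hva2.trans hvb1) (not_le.mpr hik))
        have hb1k : b1 < k := by
          by_contra hc
          push_neg at hc
          exact absurd hvb1 (not_le.mpr (hRg b1 hc))
        have hvb2a1 : τ b2 < τ a1 := lt_of_le_of_ne (hvb2.trans hva1) (by
          intro e
          have := τ.injective e
          rw [this] at hb2
          exact absurd (hb2.trans ha1) (not_le.mpr hik))
        exact ⟨a1, a2, b1, b2, lt_of_le_of_lt ha1 hia2, ha2b1, lt_of_lt_of_le hb1k hb2,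
          lt_of_le_of_lt hvb1 (hRg b2 hb2), hvb2a1, lt_of_lt_of_le (hLg a1 ha1) hva2⟩


end SmoothPerm
end

section
/- Let σ ∈ S_n and i ∈ [n] be such that σ([i-1]) = [i-1] and σ(i) ≥ j := σ^{-1}(i) > i, and let σ' = σ T_{j-1,j}. Then every transposition Bruhat-below σ' is Bruhat-below σ; T_{i,j} is Bruhat-below σ but not below σ'; and σ is smooth if and only if σ' is smooth and {transpositions ≤ σ} = {transpositions ≤ σ'} ∪ {T_{i,j}}. -/
namespace SmoothPerm

variable {n : ℕ}

section Infra

variable {n : ℕ}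

private def Fs (σ : Equiv.Perm (Fin n)) (p q : Fin n) : Finset (Fin n) :=
  Finset.univ.filter (fun x => x ≤ p ∧ σ x ≤ q)

private lemma mem_Fs {σ : Equiv.Perm (Fin n)} {p q x : Fin n} :
    x ∈ Fs σ p q ↔ x ≤ p ∧ σ x ≤ q := by simp [Fs]

private def cnt (σ : Equiv.Perm (Fin n)) (p q : Fin n) : ℕ := (Fs σ p q).card

lemma bruhatLE_iff_cnt {τ σ : Equiv.Perm (Fin n)} :
    bruhatLE τ σ ↔ ∀ p q, cnt σ p q ≤ cnt τ p q := Iff.rfl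

lemma bruhatLE_refl (σ : Equiv.Perm (Fin n)) : bruhatLE σ σ := fun _ _ => le_rfl

lemma bruhatLE_trans {τ σ' σ : Equiv.Perm (Fin n)} (h1 : bruhatLE τ σ') (h2 : bruhatLE σ' σ) :
    bruhatLE τ σ := fun p q => (h2 p q).trans (h1 p q)

private lemma val_inf (p q : Fin n) : ((p ⊓ q : Fin n) : ℕ) = min (p : ℕ) (q : ℕ) := by
  rcases le_total p q with h | h
  · rw [inf_eq_left.2 h]; exact (min_eq_left (by exact_mod_cast h)).symm
  · rw [inf_eq_right.2 h]; exact (min_eq_right (by exact_mod_cast h)).symm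

private lemma Fs_subset_Iic (σ : Equiv.Perm (Fin n)) (p q : Fin n) :
    Fs σ p q ⊆ Finset.Iic p := by
  intro x hx; rw [mem_Fs] at hx; exact Finset.mem_Iic.2 hx.1

lemma cnt_le_left (σ : Equiv.Perm (Fin n)) (p q : Fin n) : cnt σ p q ≤ (p : ℕ) + 1 := by
  have := Finset.card_le_card (Fs_subset_Iic σ p q)
  rwa [Fin.card_Iic] at this

lemma cnt_le_right (σ : Equiv.Perm (Fin n)) (p q : Fin n) : cnt σ p q ≤ (q : ℕ) + 1 := by
  have h1 : ((Fs σ p q).image σ).card = cnt σ p q :=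
    Finset.card_image_of_injective _ σ.injective
  have h2 : (Fs σ p q).image σ ⊆ Finset.Iic q := by
    intro y hy
    obtain ⟨x, hx, rfl⟩ := Finset.mem_image.1 hy
    exact Finset.mem_Iic.2 (mem_Fs.1 hx).2
  have := Finset.card_le_card h2
  rwa [h1, Fin.card_Iic] at this

lemma cnt_full_left {σ : Equiv.Perm (Fin n)} {p q : Fin n} (h : (p : ℕ) + 1 ≤ cnt σ p q) :
    ∀ x, x ≤ p → σ x ≤ q := by
  have heq : Fs σ p q = Finset.Iic p :=
    Finset.eq_of_subset_of_card_le (Fs_subset_Iic σ p q) (by rw [Fin.card_Iic]; exact h)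
  intro x hx
  have : x ∈ Fs σ p q := heq ▸ Finset.mem_Iic.2 hx
  exact (mem_Fs.1 this).2

lemma cnt_full_right {σ : Equiv.Perm (Fin n)} {p q : Fin n} (h : (q : ℕ) + 1 ≤ cnt σ p q) :
    ∀ y, y ≤ q → σ⁻¹ y ≤ p := by
  have h1 : ((Fs σ p q).image σ).card = cnt σ p q :=
    Finset.card_image_of_injective _ σ.injective
  have h2 : (Fs σ p q).image σ ⊆ Finset.Iic q := by
    intro y hy
    obtain ⟨x, hx, rfl⟩ := Finset.mem_image.1 hy
    exact Finset.mem_Iic.2 (mem_Fs.1 hx).2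
  have heq : (Fs σ p q).image σ = Finset.Iic q :=
    Finset.eq_of_subset_of_card_le h2 (by rw [Fin.card_Iic, h1]; exact h)
  intro y hy
  have : y ∈ (Fs σ p q).image σ := heq ▸ Finset.mem_Iic.2 hy
  obtain ⟨x, hx, rfl⟩ := Finset.mem_image.1 this
  rw [Equiv.Perm.coe_inv, Equiv.symm_apply_apply]
  exact (mem_Fs.1 hx).1

-- maxS lemmas
lemma le_maxS (σ : Equiv.Perm (Fin n)) {a x : Fin n} (h : x ≤ a) : σ x ≤ maxS σ a :=
  Finset.le_max' _ _ (Finset.mem_image_of_mem _ (by simp [h]))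

lemma maxS_le {σ : Equiv.Perm (Fin n)} {a q : Fin n} (h : ∀ x, x ≤ a → σ x ≤ q) :
    maxS σ a ≤ q := by
  apply Finset.max'_le
  intro y hy
  obtain ⟨x, hx, rfl⟩ := Finset.mem_image.1 hy
  simp only [Finset.mem_filter] at hx
  exact h x hx.2

lemma exists_maxS (σ : Equiv.Perm (Fin n)) (a : Fin n) : ∃ x, x ≤ a ∧ σ x = maxS σ a := by
  have := Finset.max'_mem ((Finset.univ.filter (fun x => x ≤ a)).image (fun x => σ x))
    ⟨σ a, Finset.mem_image_of_mem _ (by simp)⟩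
  obtain ⟨x, hx, hxe⟩ := Finset.mem_image.1 this
  simp only [Finset.mem_filter] at hx
  exact ⟨x, hx.2, hxe⟩

lemma maxS_mono (σ : Equiv.Perm (Fin n)) {a a' : Fin n} (h : a ≤ a') :
    maxS σ a ≤ maxS σ a' :=
  maxS_le (fun x hx => le_maxS σ (hx.trans h))

lemma inv_le_of_maps_le {σ : Equiv.Perm (Fin n)} {a : Fin n} (h : ∀ x, x ≤ a → σ x ≤ a) :
    ∀ y, y ≤ a → σ⁻¹ y ≤ a := by
  have hsub : (Finset.Iic a).image σ ⊆ Finset.Iic a := by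
    intro y hy
    obtain ⟨x, hx, rfl⟩ := Finset.mem_image.1 hy
    exact Finset.mem_Iic.2 (h x (Finset.mem_Iic.1 hx))
  have heq : (Finset.Iic a).image σ = Finset.Iic a :=
    Finset.eq_of_subset_of_card_le hsub
      (le_of_eq (Finset.card_image_of_injective _ σ.injective).symm)
  intro y hy
  have hmem : y ∈ (Finset.Iic a).image σ := by rw [heq]; exact Finset.mem_Iic.2 hy
  obtain ⟨x, hx, rfl⟩ := Finset.mem_image.1 hmem
  rw [Equiv.Perm.coe_inv, Equiv.symm_apply_apply]
  exact Finset.mem_Iic.1 hx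

lemma lt_maxS_inv {σ : Equiv.Perm (Fin n)} {a x0 : Fin n} (hx0 : x0 ≤ a) (hv : a < σ x0) :
    a < maxS σ⁻¹ a := by
  by_contra h
  push_neg at h
  have h1 : ∀ y, y ≤ a → σ⁻¹ y ≤ a := fun y hy => le_trans (le_maxS σ⁻¹ hy) h
  have h2 := inv_le_of_maps_le (σ := σ⁻¹) h1
  rw [inv_inv] at h2
  exact absurd (h2 x0 hx0) (not_le.2 hv)

end Infra

section SwapCnt

variable {n : ℕ}

private lemma swap_apply_le {a b x p : Fin n} (hx : x ≤ p) (ha : a ≤ p) (hb : b ≤ p) :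
    Equiv.swap a b x ≤ p := by
  rcases eq_or_ne x a with rfl | hxa
  · rw [Equiv.swap_apply_left]; exact hb
  rcases eq_or_ne x b with rfl | hxb
  · rw [Equiv.swap_apply_right]; exact ha
  · rw [Equiv.swap_apply_of_ne_of_ne hxa hxb]; exact hx

lemma cnt_swap_box {a b p q : Fin n} (hab : a < b) (hap : a ≤ p) (hpb : p < b)
    (haq : a ≤ q) (hqb : q < b) :
    cnt (Equiv.swap a b) p q = min (p : ℕ) (q : ℕ) := by
  have heq : Fs (Equiv.swap a b) p q = (Finset.Iic (p ⊓ q)).erase a := by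
    ext x
    rw [mem_Fs, Finset.mem_erase, Finset.mem_Iic, le_inf_iff]
    constructor
    · rintro ⟨h1, h2⟩
      have hxb : x ≠ b := fun h => absurd (h ▸ h1) (not_le.2 hpb)
      have hxa : x ≠ a := by
        rintro rfl
        rw [Equiv.swap_apply_left] at h2
        exact absurd h2 (not_le.2 hqb)
      rw [Equiv.swap_apply_of_ne_of_ne hxa hxb] at h2
      exact ⟨hxa, h1, h2⟩
    · rintro ⟨hxa, h1, h2⟩
      have hxb : x ≠ b := fun h => absurd (h ▸ h1) (not_le.2 hpb)
      rw [Equiv.swap_apply_of_ne_of_ne hxa hxb]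
      exact ⟨h1, h2⟩
  rw [cnt, heq, Finset.card_erase_of_mem
    (by rw [Finset.mem_Iic, le_inf_iff]; exact ⟨hap, haq⟩), Fin.card_Iic, val_inf]
  omega

lemma cnt_swap_out {a b p q : Fin n} (hab : a < b)
    (h : ¬(a ≤ p ∧ p < b ∧ a ≤ q ∧ q < b)) :
    cnt (Equiv.swap a b) p q = min (p : ℕ) (q : ℕ) + 1 := by
  have hcard : (Finset.Iic (p ⊓ q)).card = min (p : ℕ) (q : ℕ) + 1 := by
    rw [Fin.card_Iic, val_inf]
  by_cases hpa : p < a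
  · have heq : Fs (Equiv.swap a b) p q = Finset.Iic (p ⊓ q) := by
      ext x
      rw [mem_Fs, Finset.mem_Iic, le_inf_iff]
      have key : ∀ x : Fin n, x ≤ p → Equiv.swap a b x = x := by
        intro x hx
        exact Equiv.swap_apply_of_ne_of_ne (fun h => absurd (h ▸ hx) (not_le.2 hpa))
          (fun h => absurd (h ▸ hx) (not_le.2 (lt_trans hpa hab)))
      constructor
      · rintro ⟨h1, h2⟩; rw [key x h1] at h2; exact ⟨h1, h2⟩
      · rintro ⟨h1, h2⟩; rw [key x h1]; exact ⟨h1, h2⟩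
    rw [cnt, heq, hcard]
  by_cases hqa : q < a
  · have heq : Fs (Equiv.swap a b) p q = Finset.Iic (p ⊓ q) := by
      ext x
      rw [mem_Fs, Finset.mem_Iic, le_inf_iff]
      have hswap : ∀ y : Fin n, y ≤ q → Equiv.swap a b y = y := by
        intro y hy
        have hya : y ≠ a := fun hh => absurd (le_of_eq_of_le hh.symm hy) (not_le.2 hqa)
        have hyb : y ≠ b := fun hh =>
          absurd (le_of_eq_of_le hh.symm hy) (not_le.2 (lt_trans hqa hab))
        exact Equiv.swap_apply_of_ne_of_ne hya hyb
      constructor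
      · rintro ⟨h1, h2⟩
        refine ⟨h1, ?_⟩
        have hx : x = Equiv.swap a b (Equiv.swap a b x) := (Equiv.swap_apply_self a b x).symm
        rw [hx, hswap _ h2]
        exact h2
      · rintro ⟨h1, h2⟩
        rw [hswap x h2]
        exact ⟨h1, h2⟩
    rw [cnt, heq, hcard]
  by_cases hbq : b ≤ q
  · have heq : Fs (Equiv.swap a b) p q = Finset.Iic (p ⊓ q) := by
      ext x
      rw [mem_Fs, Finset.mem_Iic, le_inf_iff]
      constructor
      · rintro ⟨h1, h2⟩
        refine ⟨h1, ?_⟩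
        rcases eq_or_ne x a with rfl | hxa
        · exact le_trans hab.le hbq
        rcases eq_or_ne x b with rfl | hxb
        · exact hbq
        · rwa [Equiv.swap_apply_of_ne_of_ne hxa hxb] at h2
      · rintro ⟨h1, h2⟩
        exact ⟨h1, swap_apply_le h2 (le_trans hab.le hbq) hbq⟩
    rw [cnt, heq, hcard]
  -- remaining: b ≤ p
  push_neg at hpa hqa
  have hbp : b ≤ p := by
    by_contra hc
    push_neg at hc
    exact h ⟨hpa, hc, hqa, not_le.1 hbq⟩
  have hap : a ≤ p := le_trans hab.le hbp
  rw [cnt, ← hcard]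
  apply Finset.card_bij' (i := fun x _ => Equiv.swap a b x) (j := fun x _ => Equiv.swap a b x)
  · intro x hx
    rw [mem_Fs] at hx
    rw [Finset.mem_Iic, le_inf_iff]
    exact ⟨swap_apply_le hx.1 hap hbp, hx.2⟩
  · intro x hx
    rw [Finset.mem_Iic, le_inf_iff] at hx
    rw [mem_Fs]
    refine ⟨swap_apply_le hx.1 hap hbp, ?_⟩
    rw [Equiv.swap_apply_self]
    exact hx.2
  · intro x _; exact Equiv.swap_apply_self a b x
  · intro x _; exact Equiv.swap_apply_self a b x

lemma cnt_le_min (σ : Equiv.Perm (Fin n)) (p q : Fin n) :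
    cnt σ p q ≤ min (p : ℕ) (q : ℕ) + 1 := by
  rcases Nat.le_total (p : ℕ) (q : ℕ) with h | h
  · rw [min_eq_left h]; exact cnt_le_left σ p q
  · rw [min_eq_right h]; exact cnt_le_right σ p q

/-- Criterion: for `a < b`, `swap a b ≤ σ` in Bruhat order iff
`b ≤ max σ([0,a])` and `b ≤ max σ⁻¹([0,a])`. -/
lemma bruhat_swap_iff {σ : Equiv.Perm (Fin n)} {a b : Fin n} (hab : a < b) :
    bruhatLE (Equiv.swap a b) σ ↔ b ≤ maxS σ a ∧ b ≤ maxS σ⁻¹ a := by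
  constructor
  · intro h
    constructor
    · by_contra hc
      push_neg at hc
      set q := a ⊔ maxS σ a with hq
      have hqb : q < b := sup_lt_iff.2 ⟨hab, hc⟩
      have haq : a ≤ q := le_sup_left
      have h1 : cnt σ a q = (a : ℕ) + 1 := by
        have : Fs σ a q = Finset.Iic a := by
          ext x
          rw [mem_Fs, Finset.mem_Iic]
          exact ⟨fun hx => hx.1, fun hx => ⟨hx, le_trans (le_maxS σ hx) le_sup_right⟩⟩
        rw [cnt, this, Fin.card_Iic]
      have h2 := h a q
      rw [bruhatLE] at *
      have h3 := (h a q)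
      have h4 : cnt (Equiv.swap a b) a q = min (a : ℕ) (q : ℕ) :=
        cnt_swap_box hab le_rfl hab haq hqb
      have : cnt σ a q ≤ cnt (Equiv.swap a b) a q := h a q
      rw [h1, h4] at this
      omega
    · by_contra hc
      push_neg at hc
      set p := a ⊔ maxS σ⁻¹ a with hp
      have hpb : p < b := sup_lt_iff.2 ⟨hab, hc⟩
      have hap : a ≤ p := le_sup_left
      have h1 : (a : ℕ) + 1 ≤ cnt σ p a := by
        have hsub : (Finset.Iic a).image (fun z => σ⁻¹ z) ⊆ Fs σ p a := by
          intro y hy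
          obtain ⟨z, hz, rfl⟩ := Finset.mem_image.1 hy
          rw [Finset.mem_Iic] at hz
          rw [mem_Fs]
          constructor
          · exact le_trans (le_maxS σ⁻¹ hz) le_sup_right
          · rw [Equiv.Perm.coe_inv, Equiv.apply_symm_apply]; exact hz
        have := Finset.card_le_card hsub
        rwa [Finset.card_image_of_injective _ (Equiv.injective σ⁻¹), Fin.card_Iic] at this
      have h4 : cnt (Equiv.swap a b) p a = min (p : ℕ) (a : ℕ) :=
        cnt_swap_box hab hap hpb le_rfl hab
      have : cnt σ p a ≤ cnt (Equiv.swap a b) p a := h p a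
      rw [h4] at this
      have hple : (a : ℕ) ≤ (p : ℕ) := hap
      omega
  · rintro ⟨h1, h2⟩ p q
    show cnt σ p q ≤ cnt (Equiv.swap a b) p q
    by_cases hbox : a ≤ p ∧ p < b ∧ a ≤ q ∧ q < b
    · obtain ⟨hap, hpb, haq, hqb⟩ := hbox
      rw [cnt_swap_box hab hap hpb haq hqb]
      rcases Nat.le_total (p : ℕ) (q : ℕ) with hpq | hpq
      · rw [min_eq_left hpq]
        by_contra hct
        push_neg at hct
        have hfull := cnt_full_left (by omega : (p : ℕ) + 1 ≤ cnt σ p q)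
        have : maxS σ a ≤ q := maxS_le (fun x hx => hfull x (le_trans hx hap))
        exact absurd (le_trans h1 this) (not_le.2 hqb)
      · rw [min_eq_right hpq]
        by_contra hct
        push_neg at hct
        have hfull := cnt_full_right (by omega : (q : ℕ) + 1 ≤ cnt σ p q)
        have : maxS σ⁻¹ a ≤ p := maxS_le (fun y hy => hfull y (le_trans hy haq))
        exact absurd (le_trans h2 this) (not_le.2 hpb)
    · rw [cnt_swap_out hab hbox]
      exact cnt_le_min σ p q

end SwapCnt

section Step

variable {n : ℕ}

/-- Multiplying by an adjacent descent goes down in Bruhat order. -/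
lemma descent_bruhatLE {σ : Equiv.Perm (Fin n)} {k' k : Fin n} (hk : (k' : ℕ) + 1 = (k : ℕ))
    (hd : σ k < σ k') : bruhatLE (σ * Equiv.swap k' k) σ := by
  intro p q
  show cnt σ p q ≤ cnt (σ * Equiv.swap k' k) p q
  have hk'k : k' < k := by rw [Fin.lt_def]; omega
  by_cases hp : k ≤ p
  · apply le_of_eq
    apply Finset.card_bij' (i := fun x _ => Equiv.swap k' k x) (j := fun x _ => Equiv.swap k' k x)
    · intro x hx
      rw [mem_Fs] at hx ⊢
      refine ⟨swap_apply_le hx.1 (le_trans hk'k.le hp) hp, ?_⟩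
      rw [Equiv.Perm.mul_apply, Equiv.swap_apply_self]
      exact hx.2
    · intro x hx
      rw [mem_Fs] at hx ⊢
      rw [Equiv.Perm.mul_apply] at hx
      exact ⟨swap_apply_le hx.1 (le_trans hk'k.le hp) hp, hx.2⟩
    · intro x _; exact Equiv.swap_apply_self k' k x
    · intro x _; exact Equiv.swap_apply_self k' k x
  · apply Finset.card_le_card
    intro x hx
    rw [mem_Fs] at hx ⊢
    obtain ⟨h1, h2⟩ := hx
    refine ⟨h1, ?_⟩
    rw [Equiv.Perm.mul_apply]
    have hxk : x ≠ k := fun hh => hp (le_of_eq_of_le hh.symm h1)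
    rcases eq_or_ne x k' with rfl | hxk'
    · rw [Equiv.swap_apply_left]
      exact le_trans hd.le h2
    · rw [Equiv.swap_apply_of_ne_of_ne hxk' hxk]
      exact h2

private lemma swap_lt_swap {k' k a b : Fin n} (hk : (k' : ℕ) + 1 = (k : ℕ))
    (hab : a < b) (hne : ¬(a = k' ∧ b = k)) : Equiv.swap k' k a < Equiv.swap k' k b := by
  have hab' : (a : ℕ) < (b : ℕ) := hab
  by_cases ha1 : a = k'
  · have hb : b ≠ k := fun hh => hne ⟨ha1, hh⟩
    have hb' : b ≠ k' := fun hh => absurd (ha1.trans hh.symm) (ne_of_lt hab)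
    rw [ha1, Equiv.swap_apply_left, Equiv.swap_apply_of_ne_of_ne hb' hb]
    rw [Fin.lt_def]
    have h1 : (k' : ℕ) < b := ha1 ▸ hab'
    have h2 : (b : ℕ) ≠ (k : ℕ) := fun hh => hb (Fin.ext hh)
    omega
  by_cases ha2 : a = k
  · have hb1 : b ≠ k' := fun hh => by
      rw [ha2, hh] at hab'; omega
    have hb2 : b ≠ k := fun hh => absurd (ha2.trans hh.symm) (ne_of_lt hab)
    rw [ha2, Equiv.swap_apply_right, Equiv.swap_apply_of_ne_of_ne hb1 hb2]
    rw [Fin.lt_def]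
    have h1 : (k : ℕ) < b := ha2 ▸ hab'
    omega
  rw [Equiv.swap_apply_of_ne_of_ne ha1 ha2]
  by_cases hb1 : b = k'
  · rw [hb1, Equiv.swap_apply_left, Fin.lt_def]
    have : (a : ℕ) < (k' : ℕ) := hb1 ▸ hab'
    omega
  by_cases hb2 : b = k
  · rw [hb2, Equiv.swap_apply_right, Fin.lt_def]
    have h1 : (a : ℕ) < (k : ℕ) := hb2 ▸ hab'
    have h2 : (a : ℕ) ≠ (k' : ℕ) := fun hh => ha1 (Fin.ext hh)
    omega
  · rw [Equiv.swap_apply_of_ne_of_ne hb1 hb2]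
    exact hab

/-- Multiplying by an adjacent descent drops the length by one. -/
lemma descent_invNum {σ : Equiv.Perm (Fin n)} {k' k : Fin n} (hk : (k' : ℕ) + 1 = (k : ℕ))
    (hd : σ k < σ k') : invNum σ = invNum (σ * Equiv.swap k' k) + 1 := by
  have hk'k : k' < k := by rw [Fin.lt_def]; omega
  have hFinj : Function.Injective
      (fun p : Fin n × Fin n => (Equiv.swap k' k p.1, Equiv.swap k' k p.2)) := by
    intro p q hpq
    simp only [Prod.mk.injEq] at hpq
    exact Prod.ext ((Equiv.swap k' k).injective hpq.1) ((Equiv.swap k' k).injective hpq.2)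
  have key : Finset.univ.filter (fun p : Fin n × Fin n => p.1 < p.2 ∧ σ p.2 < σ p.1) =
      insert (k', k)
        ((Finset.univ.filter (fun p : Fin n × Fin n =>
            p.1 < p.2 ∧ (σ * Equiv.swap k' k) p.2 < (σ * Equiv.swap k' k) p.1)).image
          (fun p => (Equiv.swap k' k p.1, Equiv.swap k' k p.2))) := by
    ext ⟨a, b⟩
    constructor
    · intro hmem
      rw [Finset.mem_filter] at hmem
      obtain ⟨-, h1, h2⟩ := hmem
      rw [Finset.mem_insert]
      by_cases hkk : (a, b) = (k', k)
      · exact Or.inl hkk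
      · right
        rw [Finset.mem_image]
        refine ⟨(Equiv.swap k' k a, Equiv.swap k' k b), ?_, ?_⟩
        · rw [Finset.mem_filter]
          refine ⟨Finset.mem_univ _, swap_lt_swap hk h1 ?_, ?_⟩
          · rintro ⟨hx1, hy1⟩
            exact hkk (by rw [hx1, hy1])
          · show (σ * Equiv.swap k' k) (Equiv.swap k' k b) <
              (σ * Equiv.swap k' k) (Equiv.swap k' k a)
            rw [Equiv.Perm.mul_apply, Equiv.Perm.mul_apply, Equiv.swap_apply_self,
              Equiv.swap_apply_self]
            exact h2
        · show (Equiv.swap k' k (Equiv.swap k' k a), Equiv.swap k' k (Equiv.swap k' k b)) = (a, b)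
          rw [Equiv.swap_apply_self, Equiv.swap_apply_self]
    · intro hmem
      rw [Finset.mem_insert] at hmem
      rw [Finset.mem_filter]
      rcases hmem with heq | hmem
      · have ha : a = k' := congrArg Prod.fst heq
        have hb : b = k := congrArg Prod.snd heq
        refine ⟨Finset.mem_univ _, ?_, ?_⟩
        · show a < b
          rw [ha, hb]; exact hk'k
        · show σ b < σ a
          rw [ha, hb]; exact hd
      · obtain ⟨⟨x, y⟩, hxy, hexy⟩ := Finset.mem_image.1 hmem
        rw [Finset.mem_filter] at hxy
        obtain ⟨-, hxy1, hxy2⟩ := hxy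
        have ha : Equiv.swap k' k x = a := congrArg Prod.fst hexy
        have hb : Equiv.swap k' k y = b := congrArg Prod.snd hexy
        have hv' : σ (Equiv.swap k' k y) < σ (Equiv.swap k' k x) := hxy2
        have hne : ¬(x = k' ∧ y = k) := by
          rintro ⟨hx1, hy1⟩
          rw [hx1, hy1, Equiv.swap_apply_left, Equiv.swap_apply_right] at hv'
          exact absurd hv' (not_lt.2 hd.le)
        refine ⟨Finset.mem_univ _, ?_, ?_⟩
        · show a < b
          rw [← ha, ← hb]
          exact swap_lt_swap hk hxy1 hne
        · show σ b < σ a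
          rw [← ha, ← hb]
          exact hv'
  have hnotmem : (k', k) ∉
      ((Finset.univ.filter (fun p : Fin n × Fin n =>
          p.1 < p.2 ∧ (σ * Equiv.swap k' k) p.2 < (σ * Equiv.swap k' k) p.1)).image
        (fun p => (Equiv.swap k' k p.1, Equiv.swap k' k p.2))) := by
    intro hmem
    obtain ⟨⟨x, y⟩, hxy, hexy⟩ := Finset.mem_image.1 hmem
    have hex1 : Equiv.swap k' k x = k' := congrArg Prod.fst hexy
    have hex2 : Equiv.swap k' k y = k := congrArg Prod.snd hexy
    have hx : x = k := by
      have h3 := congrArg (Equiv.swap k' k) hex1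
      rwa [Equiv.swap_apply_self, Equiv.swap_apply_left] at h3
    have hy : y = k' := by
      have h3 := congrArg (Equiv.swap k' k) hex2
      rwa [Equiv.swap_apply_self, Equiv.swap_apply_right] at h3
    rw [Finset.mem_filter] at hxy
    rw [hx, hy] at hxy
    exact absurd hxy.2.1 (not_lt.2 hk'k.le)
  rw [invNum, key, Finset.card_insert_of_notMem hnotmem,
    Finset.card_image_of_injective _ hFinj]
  rfl

end Step

section Move

variable {n : ℕ}

lemma move_lemma (r : Fin n) :
    ∀ d : ℕ, ∀ σ : Equiv.Perm (Fin n), ∀ p : Fin n,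
      (∀ x, r < x → σ x = x) → σ p = r → (r : ℕ) = (p : ℕ) + d →
      ∃ u : Equiv.Perm (Fin n),
        (∀ x, r ≤ x → u x = x) ∧ invNum σ = invNum u + d ∧ bruhatLE u σ ∧
        (∀ a : Fin n, a < r →
          (((p : ℕ) < (maxS σ⁻¹ a : ℕ) → ((maxS u⁻¹ a : ℕ)) + 1 = (maxS σ⁻¹ a : ℕ)) ∧
           ((maxS σ⁻¹ a : ℕ) ≤ (p : ℕ) → maxS u⁻¹ a = maxS σ⁻¹ a))) := by
  intro d
  induction d with
  | zero =>
    intro σ p hfix hp hd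
    have hpr : p = r := Fin.ext (by omega)
    refine ⟨σ, ?_, by omega, bruhatLE_refl σ, ?_⟩
    · intro x hx
      rcases eq_or_lt_of_le hx with heq | hlt
      · rw [← heq, ← hpr, hp, hpr]
      · exact hfix x hlt
    · intro a ha
      have hbound : (maxS σ⁻¹ a : ℕ) ≤ (p : ℕ) := by
        rw [hpr]
        have : maxS σ⁻¹ a ≤ r := by
          apply maxS_le
          intro y hy
          by_contra hc
          push_neg at hc
          have h1 := hfix (σ⁻¹ y) hc
          have h2 : y = σ⁻¹ y := (σ.apply_symm_apply y).symm.trans h1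
          rw [← h2] at hc
          have c1 : (y : ℕ) ≤ (a : ℕ) := hy
          have c2 : (a : ℕ) < (r : ℕ) := ha
          have c3 : (r : ℕ) < (y : ℕ) := hc
          omega
        exact this
      exact ⟨fun hcon => absurd hcon (not_lt.2 hbound), fun _ => rfl⟩
  | succ d ih =>
    intro σ p hfix hp hd
    have hrn := r.isLt
    have hpn : (p : ℕ) + 1 < n := by omega
    set p1 : Fin n := ⟨(p : ℕ) + 1, hpn⟩ with hp1
    have hpp1 : (p : ℕ) + 1 = (p1 : ℕ) := rfl
    have hps : σ p1 < σ p := by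
      have hnep : p1 ≠ p := by
        intro hh
        have : (p1 : ℕ) = (p : ℕ) := congrArg Fin.val hh
        omega
      have hne : σ p1 ≠ r := by
        rw [← hp]
        exact fun hh => hnep (σ.injective hh)
      have hle : σ p1 ≤ r := by
        by_contra hc
        push_neg at hc
        have h1 := hfix (σ p1) hc
        have h2 : σ p1 = p1 := σ.injective h1
        rw [h2] at hc
        have : (p1 : ℕ) ≤ r := by omega
        exact absurd hc (not_lt.2 (by rw [Fin.le_def]; exact this))
      rw [hp]
      exact lt_of_le_of_ne hle hne
    set σ' := σ * Equiv.swap p p1 with hσ'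
    have hfix' : ∀ x, r < x → σ' x = x := by
      intro x hx
      have hx1 : (r : ℕ) < (x : ℕ) := hx
      rw [hσ', Equiv.Perm.mul_apply, Equiv.swap_apply_of_ne_of_ne]
      · exact hfix x hx
      · intro hh; have : (x : ℕ) = p := congrArg Fin.val hh; omega
      · intro hh; have : (x : ℕ) = (p : ℕ) + 1 := congrArg Fin.val hh; omega
    have hp' : σ' p1 = r := by
      rw [hσ', Equiv.Perm.mul_apply, Equiv.swap_apply_right, hp]
    have hd' : (r : ℕ) = (p1 : ℕ) + d := by omega
    obtain ⟨u, hufix, hulen, huble, huinv⟩ := ih σ' p1 hfix' hp' hd'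
    refine ⟨u, hufix, ?_, ?_, ?_⟩
    · rw [descent_invNum hpp1 hps, hulen]; omega
    · exact bruhatLE_trans huble (descent_bruhatLE hpp1 hps)
    · intro a ha
      obtain ⟨hu1, hu2⟩ := huinv a ha
      have hainv : ∀ y : Fin n, σ'⁻¹ y = Equiv.swap p p1 (σ⁻¹ y) := by
        intro y
        rw [hσ', mul_inv_rev, Equiv.Perm.mul_apply, Equiv.swap_inv]
      have hnp : ∀ y : Fin n, y ≤ a → σ⁻¹ y ≠ p := by
        intro y hy hc
        have h1 : σ p = y := by rw [← hc, Equiv.Perm.coe_inv, Equiv.apply_symm_apply]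
        rw [hp] at h1
        exact absurd (lt_of_le_of_lt hy ha) (by rw [h1]; exact lt_irrefl _)
      obtain ⟨y0, hy0a, hy0M⟩ := exists_maxS σ⁻¹ a
      have hMnep : (maxS σ⁻¹ a : ℕ) ≠ (p : ℕ) := by
        intro hc
        exact hnp y0 hy0a (by rw [hy0M]; exact Fin.ext hc)
      rcases lt_trichotomy ((maxS σ⁻¹ a : ℕ)) ((p1 : ℕ)) with hM | hM | hM
      · -- maxS σ⁻¹ a < p1, hence < p (≠ p): all positions fixed by the swap
        have hMp : (maxS σ⁻¹ a : ℕ) < (p : ℕ) := by omega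
        have heqM : maxS σ'⁻¹ a = maxS σ⁻¹ a := by
          have hfixy : ∀ y : Fin n, y ≤ a → σ'⁻¹ y = σ⁻¹ y := by
            intro y hy
            rw [hainv]
            apply Equiv.swap_apply_of_ne_of_ne
            · intro hh
              have := le_maxS σ⁻¹ hy
              rw [hh] at this
              have := Fin.le_def.1 this; omega
            · intro hh
              have := le_maxS σ⁻¹ hy
              rw [hh] at this
              have := Fin.le_def.1 this
              simp only [hp1] at this; omega
          apply le_antisymm
          · apply maxS_le
            intro y hy
            rw [hfixy y hy]
            exact le_maxS σ⁻¹ hy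
          · rw [← hy0M, ← hfixy y0 hy0a]
            exact le_maxS σ'⁻¹ hy0a
        constructor
        · intro hcon; omega
        · intro _
          have h2 := hu2 (by rw [heqM]; simp only [hp1]; omega)
          rw [h2, heqM]
      · -- maxS σ⁻¹ a = p1
        have heqM : (maxS σ'⁻¹ a : ℕ) = (p : ℕ) := by
          have hy0' : σ'⁻¹ y0 = p := by
            rw [hainv, hy0M]
            have : maxS σ⁻¹ a = p1 := Fin.ext hM
            rw [this, Equiv.swap_apply_right]
          have hub : ∀ y : Fin n, y ≤ a → (σ'⁻¹ y : ℕ) ≤ (p : ℕ) := by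
            intro y hy
            rcases eq_or_ne (σ⁻¹ y) p1 with hh | hh
            · rw [hainv, hh, Equiv.swap_apply_right]
            · have hlt : (σ⁻¹ y : ℕ) < (p : ℕ) := by
                have := Fin.le_def.1 (le_maxS σ⁻¹ hy)
                have hne2 : (σ⁻¹ y : ℕ) ≠ (p1 : ℕ) := fun hc => hh (Fin.ext hc)
                have hne3 : (σ⁻¹ y : ℕ) ≠ (p : ℕ) := fun hc => hnp y hy (Fin.ext hc)
                simp only [hp1] at *
                omega
              rw [hainv, Equiv.swap_apply_of_ne_of_ne]
              · omega
              · exact fun hc => absurd (congrArg Fin.val hc) (by omega)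
              · exact fun hc => absurd (congrArg Fin.val hc) (by simp only [hp1]; omega)
          apply le_antisymm
          · have := maxS_le (σ := σ'⁻¹) (q := p) (fun y hy => Fin.le_def.2 (hub y hy))
            exact Fin.le_def.1 this
          · have := le_maxS σ'⁻¹ hy0a
            rw [hy0'] at this
            exact Fin.le_def.1 this
        constructor
        · intro _
          have h2 := hu2 (by simp only [hp1] at *; omega)
          rw [h2]
          omega
        · intro hcon; omega
      · -- maxS σ⁻¹ a > p1 : max unchanged
        have heqM : maxS σ'⁻¹ a = maxS σ⁻¹ a := by
          apply le_antisymm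
          · apply maxS_le
            intro y hy
            rw [hainv]
            have h1 := le_maxS σ⁻¹ hy
            rcases eq_or_ne (σ⁻¹ y) p with hh | hh
            · exact absurd hh (hnp y hy)
            rcases eq_or_ne (σ⁻¹ y) p1 with hh2 | hh2
            · rw [hh2, Equiv.swap_apply_right]
              rw [Fin.le_def]; omega
            · rw [Equiv.swap_apply_of_ne_of_ne hh hh2]
              exact h1
          · have hy0ne1 : σ⁻¹ y0 ≠ p := hnp y0 hy0a
            have hy0ne2 : σ⁻¹ y0 ≠ p1 := by
              intro hc
              rw [← hy0M, hc] at hM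
              omega
            have : σ'⁻¹ y0 = σ⁻¹ y0 := by
              rw [hainv, Equiv.swap_apply_of_ne_of_ne hy0ne1 hy0ne2]
            rw [← hy0M, ← this]
            exact le_maxS σ'⁻¹ hy0a
        constructor
        · intro _
          have h1 := hu1 (by rw [heqM]; omega)
          rw [heqM] at h1
          exact h1
        · intro hcon; omega

end Move

section Ineq

variable {n : ℕ}

/-- The set of transpositions Bruhat-below σ. -/
def Tset (σ : Equiv.Perm (Fin n)) : Set (Equiv.Perm (Fin n)) :=
  {τ | isTransposition τ ∧ bruhatLE τ σ}

lemma invNum_le_aux :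
    ∀ (r : ℕ) (σ : Equiv.Perm (Fin n)), (∀ x : Fin n, r ≤ (x : ℕ) → σ x = x) →
      invNum σ ≤ (Tset σ).ncard := by
  intro r
  induction r with
  | zero =>
    intro σ hfix
    have hone : σ = 1 := Equiv.ext fun x => hfix x (Nat.zero_le _)
    have h0 : invNum σ = 0 := by
      rw [invNum, Finset.card_eq_zero, Finset.eq_empty_iff_forall_notMem]
      rintro ⟨a, b⟩ hmem
      rw [Finset.mem_filter] at hmem
      obtain ⟨-, h1, h2⟩ := hmem
      rw [hone] at h2
      simp only [Equiv.Perm.one_apply] at h2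
      exact absurd h2 (not_lt.2 h1.le)
    rw [h0]
    exact Nat.zero_le _
  | succ r ih =>
    intro σ hfix
    by_cases hn : n ≤ r
    · exact ih σ (fun x hx => absurd hx (by have := x.isLt; omega))
    push_neg at hn
    set rr : Fin n := ⟨r, hn⟩ with hrr
    have hrrval : ((rr : Fin n) : ℕ) = r := rfl
    by_cases hfixr : σ rr = rr
    · apply ih
      intro x hx
      rcases eq_or_lt_of_le hx with heq | hlt
      · have hxr : x = rr := Fin.ext heq.symm
        rw [hxr]; exact hfixr
      · exact hfix x (by omega)
    · set p := σ⁻¹ rr with hpd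
      have hp : σ p = rr := σ.apply_symm_apply rr
      have hpr : (p : ℕ) < r := by
        rcases lt_trichotomy ((p : ℕ)) r with h | h | h
        · exact h
        · exfalso
          have hprr : p = rr := Fin.ext h
          rw [hprr] at hp
          exact hfixr hp
        · exfalso
          have h1 : σ p = p := hfix p (by omega)
          rw [h1] at hp
          have h2 := congrArg Fin.val hp
          simp only [hrr] at h2
          omega
      obtain ⟨u, hufix, hulen, huble, huinv⟩ :=
        move_lemma rr (r - p) σ p (fun x hx => hfix x (by have := Fin.lt_def.1 hx; omega))
          hp (by omega)
      have hu := ih u (fun x hx => hufix x (by rw [Fin.le_def]; exact hx))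
      -- the new transpositions
      have hmax_lt : ∀ a : Fin n, p ≤ a → a < rr → a < maxS σ⁻¹ a := by
        intro a h1 h2
        exact lt_maxS_inv h1 (by rw [hp]; exact h2)
      have hmax_le : ∀ a : Fin n, a < rr → maxS σ⁻¹ a ≤ rr := by
        intro a h2
        apply maxS_le
        intro y hy
        by_contra hc
        push_neg at hc
        have h3 := hfix (σ⁻¹ y) (by have := Fin.lt_def.1 hc; omega)
        have h4 : y = σ⁻¹ y := (σ.apply_symm_apply y).symm.trans h3
        rw [← h4] at hc
        have c1 := Fin.le_def.1 hy
        have c2 := Fin.lt_def.1 h2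
        have c3 := Fin.lt_def.1 hc
        omega
      set A : Set (Fin n) := {a : Fin n | p ≤ a ∧ a < rr} with hA
      set f : Fin n → Equiv.Perm (Fin n) := fun a => Equiv.swap a (maxS σ⁻¹ a) with hf
      have hW_sub : f '' A ⊆ Tset σ := by
        rintro τ ⟨a, ⟨ha1, ha2⟩, rfl⟩
        have hlt := hmax_lt a ha1 ha2
        constructor
        · exact ⟨a, maxS σ⁻¹ a, hlt, rfl⟩
        · rw [bruhat_swap_iff hlt]
          refine ⟨?_, le_rfl⟩
          calc maxS σ⁻¹ a ≤ rr := hmax_le a ha2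
          _ = σ p := hp.symm
          _ ≤ maxS σ a := le_maxS σ ha1
      have hW_disj : ∀ τ ∈ f '' A, τ ∉ Tset u := by
        rintro τ ⟨a, ⟨ha1, ha2⟩, rfl⟩ ⟨-, hble⟩
        have hlt := hmax_lt a ha1 ha2
        have hcrit := (bruhat_swap_iff hlt).1 hble
        obtain ⟨hi1, hi2⟩ := huinv a ha2
        have hplt : (p : ℕ) < (maxS σ⁻¹ a : ℕ) :=
          lt_of_le_of_lt (Fin.le_def.1 ha1) (Fin.lt_def.1 hlt)
        have h5 := hi1 hplt
        have h6 := Fin.le_def.1 hcrit.2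
        omega
      have hTu_sub : Tset u ⊆ Tset σ := fun τ hτ => ⟨hτ.1, bruhatLE_trans hτ.2 huble⟩
      have hinj : Set.InjOn f A := by
        rintro a1 ⟨h11, h12⟩ a2 ⟨h21, h22⟩ heq
        by_contra hne
        have hl1 := hmax_lt a1 h11 h12
        have hl2 := hmax_lt a2 h21 h22
        have happ := Equiv.ext_iff.1 heq a1
        rw [hf] at happ
        simp only at happ
        rw [Equiv.swap_apply_left] at happ
        rcases eq_or_ne a1 (maxS σ⁻¹ a2) with hcase | hcase
        · have h7 : Equiv.swap a2 (maxS σ⁻¹ a2) a1 = a2 := by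
            rw [hcase, Equiv.swap_apply_right]
          have c3 := congrArg Fin.val (happ.trans h7)
          have c1 := Fin.lt_def.1 hl1
          have c2 := Fin.lt_def.1 hl2
          have c4 := congrArg Fin.val hcase
          omega
        · rw [Equiv.swap_apply_of_ne_of_ne hne hcase] at happ
          exact absurd happ.symm (ne_of_lt hl1)
      have hWcard : (f '' A).ncard = r - (p : ℕ) := by
        rw [Set.ncard_image_of_injOn hinj]
        have : A = ↑(Finset.Ico p rr) := by
          ext x
          simp [hA, Finset.mem_Ico]
        rw [this, Set.ncard_coe_finset, Fin.card_Ico]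
      have hsub2 : Tset u ∪ f '' A ⊆ Tset σ := Set.union_subset hTu_sub hW_sub
      have hdisj : Disjoint (Tset u) (f '' A) := by
        rw [Set.disjoint_right]
        intro τ hτ
        exact hW_disj τ hτ
      have hcount : (Tset u).ncard + (r - (p : ℕ)) ≤ (Tset σ).ncard := by
        have h1 : (Tset u ∪ f '' A).ncard = (Tset u).ncard + (f '' A).ncard :=
          Set.ncard_union_eq hdisj (Set.toFinite _) (Set.toFinite _)
        have h2 : (Tset u ∪ f '' A).ncard ≤ (Tset σ).ncard :=
          Set.ncard_le_ncard hsub2 (Set.toFinite _)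
        omega
      calc invNum σ = invNum u + (r - (p : ℕ)) := hulen
      _ ≤ (Tset u).ncard + (r - (p : ℕ)) := by omega
      _ ≤ (Tset σ).ncard := hcount

lemma invNum_le_ncard_Tset (σ : Equiv.Perm (Fin n)) : invNum σ ≤ (Tset σ).ncard :=
  invNum_le_aux n σ (fun x hx => absurd hx (by have := x.isLt; omega))

lemma natCard_eq_Tset (σ : Equiv.Perm (Fin n)) :
    Nat.card {τ : Equiv.Perm (Fin n) // isTransposition τ ∧ bruhatLE τ σ} = (Tset σ).ncard :=
  Nat.card_coe_set_eq _

end Ineq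

theorem smooth_induction_step (n : ℕ) (σ : Equiv.Perm (Fin n)) (i j j' : Fin n)
    (hfix : ∀ x, x < i → σ x < i)
    (hij : i < j) (hinv : σ⁻¹ i = j) (hsi : j ≤ σ i)
    (hj' : (j' : ℕ) + 1 = (j : ℕ)) :
    (∀ τ, isTransposition τ → bruhatLE τ (σ * Equiv.swap j' j) → bruhatLE τ σ) ∧
    (bruhatLE (Equiv.swap i j) σ ∧ ¬ bruhatLE (Equiv.swap i j) (σ * Equiv.swap j' j)) ∧
    (smooth σ ↔ (smooth (σ * Equiv.swap j' j) ∧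
      ∀ τ, isTransposition τ →
        (bruhatLE τ σ ↔ (bruhatLE τ (σ * Equiv.swap j' j) ∨ τ = Equiv.swap i j)))) := by
  have hσj : σ j = i := by rw [← hinv, Equiv.Perm.coe_inv, Equiv.apply_symm_apply]
  have hij' : (i : ℕ) ≤ (j' : ℕ) := by have := Fin.lt_def.1 hij; omega
  have hj'j : j' < j := by rw [Fin.lt_def]; omega
  have hmaps : ∀ x : Fin n, σ x < i → x < i := by
    intro x hx
    rcases Nat.eq_zero_or_pos (i : ℕ) with h0 | h0
    · exact absurd (Fin.lt_def.1 hx) (by omega)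
    · have hin : (i : ℕ) - 1 < n := by have := i.isLt; omega
      set a : Fin n := ⟨(i : ℕ) - 1, hin⟩ with ha
      have hiff : ∀ y : Fin n, y < i ↔ y ≤ a := by
        intro y
        rw [Fin.lt_def, Fin.le_def]
        simp only [ha]
        omega
      have h1 : ∀ y, y ≤ a → σ y ≤ a := fun y hy => (hiff _).1 (hfix y ((hiff y).2 hy))
      have h2 := inv_le_of_maps_le h1
      have h3 := h2 (σ x) ((hiff _).1 hx)
      rw [Equiv.Perm.coe_inv, Equiv.symm_apply_apply] at h3
      exact (hiff x).2 h3
  have hσj' : i < σ j' := by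
    have hne : σ j' ≠ i := by
      rw [← hσj]
      exact fun h => (ne_of_lt hj'j) (σ.injective h)
    by_contra hc
    push_neg at hc
    have hlt : σ j' < i := lt_of_le_of_ne hc hne
    have := Fin.lt_def.1 (hmaps j' hlt)
    omega
  have hd : σ j < σ j' := by rw [hσj]; exact hσj'
  have part1 : ∀ τ : Equiv.Perm (Fin n), bruhatLE τ (σ * Equiv.swap j' j) → bruhatLE τ σ :=
    fun τ h => bruhatLE_trans h (descent_bruhatLE hj' hd)
  have hts : bruhatLE (Equiv.swap i j) σ := by
    rw [bruhat_swap_iff hij]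
    constructor
    · exact le_trans hsi (le_maxS σ le_rfl)
    · have h1 := le_maxS σ⁻¹ (le_refl i)
      rw [hinv] at h1
      exact h1
  have hts' : ¬ bruhatLE (Equiv.swap i j) (σ * Equiv.swap j' j) := by
    rw [bruhat_swap_iff hij]
    rintro ⟨-, h2⟩
    have hle : maxS (σ * Equiv.swap j' j)⁻¹ i ≤ j' := by
      apply maxS_le
      intro y hy
      have h3 : (σ * Equiv.swap j' j)⁻¹ y = Equiv.swap j' j (σ⁻¹ y) := by
        rw [mul_inv_rev, Equiv.Perm.mul_apply, Equiv.swap_inv]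
      rcases eq_or_lt_of_le hy with heq | hlt
      · rw [h3, heq, hinv, Equiv.swap_apply_right]
      · have h4 : σ⁻¹ y < i := hmaps (σ⁻¹ y) (by rw [Equiv.Perm.coe_inv, Equiv.apply_symm_apply]; exact hlt)
        have h5 := Fin.lt_def.1 h4
        rw [h3, Equiv.swap_apply_of_ne_of_ne]
        · rw [Fin.le_def]; omega
        · exact fun hc => by have := congrArg Fin.val hc; omega
        · exact fun hc => by have := congrArg Fin.val hc; omega
    have c1 := Fin.le_def.1 h2
    have c2 := Fin.le_def.1 hle
    omega
  have hlen : invNum σ = invNum (σ * Equiv.swap j' j) + 1 := descent_invNum hj' hd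
  have htrans_t : isTransposition (Equiv.swap i j) := ⟨i, j, hij, rfl⟩
  have hsub : Tset (σ * Equiv.swap j' j) ⊆ Tset σ := fun τ hτ => ⟨hτ.1, part1 τ hτ.2⟩
  have htmem : Equiv.swap i j ∈ Tset σ := ⟨htrans_t, hts⟩
  have htnot : Equiv.swap i j ∉ Tset (σ * Equiv.swap j' j) := fun h => hts' h.2
  have hNc : ∀ ρ : Equiv.Perm (Fin n), smooth ρ ↔ invNum ρ = (Tset ρ).ncard := by
    intro ρ
    unfold smooth
    rw [natCard_eq_Tset]
  have hdisj : Disjoint (Tset (σ * Equiv.swap j' j)) {Equiv.swap i j} := by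
    rw [Set.disjoint_singleton_right]
    exact htnot
  have hunion_sub : Tset (σ * Equiv.swap j' j) ∪ {Equiv.swap i j} ⊆ Tset σ :=
    Set.union_subset hsub (by simp [htmem])
  have hcard_union : (Tset (σ * Equiv.swap j' j) ∪ {Equiv.swap i j}).ncard =
      (Tset (σ * Equiv.swap j' j)).ncard + 1 := by
    rw [Set.ncard_union_eq hdisj (Set.toFinite _) (Set.toFinite _), Set.ncard_singleton]
  refine ⟨fun τ _ h => part1 τ h, ⟨hts, hts'⟩, ?_⟩
  constructor
  · intro hsm
    rw [hNc] at hsm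
    have hineq1 : invNum (σ * Equiv.swap j' j) ≤ (Tset (σ * Equiv.swap j' j)).ncard :=
      invNum_le_ncard_Tset _
    have hineq2 : (Tset (σ * Equiv.swap j' j) ∪ {Equiv.swap i j}).ncard ≤ (Tset σ).ncard :=
      Set.ncard_le_ncard hunion_sub (Set.toFinite _)
    have hseteq : Tset σ = Tset (σ * Equiv.swap j' j) ∪ {Equiv.swap i j} :=
      (Set.eq_of_subset_of_ncard_le hunion_sub (by omega) (Set.toFinite _)).symm
    constructor
    · rw [hNc]; omega
    · intro τ htρ
      constructor
      · intro hb
        have hmem : τ ∈ Tset σ := ⟨htρ, hb⟩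
        rw [hseteq] at hmem
        rcases hmem with h | h
        · exact Or.inl h.2
        · exact Or.inr (by simpa using h)
      · rintro (hb | rfl)
        · exact part1 τ hb
        · exact hts
  · rintro ⟨hsm', hiff⟩
    rw [hNc] at hsm' ⊢
    have hseteq : Tset σ = Tset (σ * Equiv.swap j' j) ∪ {Equiv.swap i j} := by
      ext τ
      constructor
      · rintro ⟨h1, h2⟩
        rcases (hiff τ h1).1 h2 with h | h
        · exact Or.inl ⟨h1, h⟩
        · exact Or.inr (by simp [h])
      · rintro (h | h)
        · exact ⟨h.1, part1 τ h.2⟩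
        · have heq : τ = Equiv.swap i j := by simpa using h
          rw [heq]
          exact htmem
    rw [hseteq, hcard_union]
    omega


end SmoothPerm
end

section
/- For every nonempty admissible subset A of C^{2,3}, at least one of A or A^{-1} has a wedge: namely, if T_{i,j} ∈ A with i minimal and j maximal for that i, then T_{i,j} is a wedge for A or for A^{-1}. -/
namespace SmoothPerm

variable {n : ℕ}

/-- existence of a wedge for A or A⁻¹. -/
theorem exists_wedge (n : ℕ) (A : Set (Equiv.Perm (Fin n))) (hA : admissible A)
    (i j : Fin n) (hij : i < j) (hmem : Equiv.swap i j ∈ A)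
    (hmin : ∀ a b : Fin n, a < b → Equiv.swap a b ∈ A → i ≤ a)
    (hmax : ∀ b : Fin n, i < b → Equiv.swap i b ∈ A → b ≤ j) :
    isWedge A i j ∨ isWedge {σ | σ⁻¹ ∈ A} i j := by
  have hno_left : ∀ i' : Fin n, (i' : ℕ) + 1 = (i : ℕ) → Equiv.swap i' i ∉ A := by
    intro i' h hmem'
    have hi' : i' < i := Fin.lt_def.mpr (by omega)
    have := hmin i' i hi' hmem'
    rw [Fin.le_def] at this
    omega
  by_cases hR : ∀ j' : Fin n, (j : ℕ) + 1 = (j' : ℕ) → Rc i j j' ∉ A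
  · exact Or.inl ⟨hij, hmem, hno_left, hR⟩
  · right
    refine ⟨hij, ?_, hno_left, ?_⟩
    · show (Equiv.swap i j)⁻¹ ∈ A
      rwa [Equiv.swap_inv]
    · push_neg at hR
      obtain ⟨j', hj', hRmem⟩ := hR
      intro j'' hj'' hLmem
      have hj'eq : j'' = j' := Fin.ext (by omega)
      subst hj'eq
      have hjlt : j < j'' := Fin.lt_def.mpr (by omega)
      have hLmem' : Lc i j j'' ∈ A := hLmem
      have hswap : Equiv.swap i j'' ∈ A :=
        hA.2.2.1 i j j j'' hij hjlt hij hjlt hRmem hLmem'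
      have := hmax j'' (lt_trans hij hjlt) hswap
      rw [Fin.le_def] at this
      omega

end SmoothPerm
end
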